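/- arXiv:2512.18819 — 5 statements merged into one kernel-verified Lean document; each statement's English description precedes it below -/
import Mathlib

section
/- Carbon Accounting Theorem (nodal form). Let N, L, G be finite sets of buses, transmission lines, and generators, with maps src, dst : L → N giving each line's endpoint buses and bus : G → N giving each generator's bus. Let d : N → ℝ be nodal loads, P : G → ℝ generator outputs, and f : L → ℝ line flows satisfying nodal power balance at every bus i: (Σ over generators g with bus g = i of P g) − (Σ over lines ℓ with src ℓ = i of f ℓ) + (Σ over lines ℓ with dst ℓ = i of f ℓ) = d i. Let CI : G → ℝ be generator carbon intensities, λ : N → ℝ the locational marginal emissions, and σ⁺, σ⁻ : L → ℝ line-limit multipliers satisfying the flow stationarity condition λ(src ℓ) − λ(dst ℓ) + σ⁺ ℓ − σ⁻ ℓ = 0 for every line ℓ. Define the shadow carbon intensity SCI ℓ := σ⁻ ℓ − σ⁺ ℓ. Then Σ_{i ∈ N} λ i · d i + Σ_{g ∈ G} (CI g − λ(bus g)) · P g + Σ_{ℓ ∈ L} SCI ℓ · f ℓ = Σ_{g ∈ G} CI g · P g; that is, the load carbon accounts, generator carbon accounts, and transmission carbon accounts sum exactly to the total system (scope 1) emissions.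 -/
/-- **Carbon Accounting Theorem (nodal form).**
Given a power network with buses `N`, lines `L`, generators `G`, a dispatch
`(P, f)` with loads `d` satisfying nodal power balance, generator carbon
intensities `CI`, locational marginal emissions `lme`, and line-limit
multipliers `σp, σm` satisfying the flow stationarity condition, the load
carbon accounts, generator carbon accounts, and transmission carbon accounts
(with shadow carbon intensity `SCI ℓ = σm ℓ - σp ℓ`) sum exactly to the total
system (scope 1) emissions. -/
theorem carbon_accounting_theorem
    {N L G : Type*} [Fintype N] [Fintype L] [Fintype G] [DecidableEq N]
    (src dst : L → N) (bus : G → N)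
    (d : N → ℝ) (P : G → ℝ) (f : L → ℝ)
    (hbal : ∀ i : N,
      (∑ g ∈ Finset.univ.filter (fun g => bus g = i), P g)
        - (∑ ℓ ∈ Finset.univ.filter (fun ℓ => src ℓ = i), f ℓ)
        + (∑ ℓ ∈ Finset.univ.filter (fun ℓ => dst ℓ = i), f ℓ) = d i)
    (CI : G → ℝ) (lme : N → ℝ) (σp σm : L → ℝ)
    (hstat : ∀ ℓ : L, lme (src ℓ) - lme (dst ℓ) + σp ℓ - σm ℓ = 0)
    (SCI : L → ℝ) (hSCI : ∀ ℓ, SCI ℓ = σm ℓ - σp ℓ) :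
    (∑ i : N, lme i * d i)
      + (∑ g : G, (CI g - lme (bus g)) * P g)
      + (∑ ℓ : L, SCI ℓ * f ℓ)
      = ∑ g : G, CI g * P g := by
  have hG : ∀ i : N, lme i * (∑ g ∈ Finset.univ.filter (fun g => bus g = i), P g)
      = ∑ g ∈ Finset.univ.filter (fun g => bus g = i), lme (bus g) * P g := by
    intro i
    rw [Finset.mul_sum]
    refine Finset.sum_congr rfl fun g hg => ?_
    rw [(Finset.mem_filter.mp hg).2]
  have hS : ∀ i : N, lme i * (∑ ℓ ∈ Finset.univ.filter (fun ℓ => src ℓ = i), f ℓ)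
      = ∑ ℓ ∈ Finset.univ.filter (fun ℓ => src ℓ = i), lme (src ℓ) * f ℓ := by
    intro i
    rw [Finset.mul_sum]
    refine Finset.sum_congr rfl fun ℓ hℓ => ?_
    rw [(Finset.mem_filter.mp hℓ).2]
  have hD : ∀ i : N, lme i * (∑ ℓ ∈ Finset.univ.filter (fun ℓ => dst ℓ = i), f ℓ)
      = ∑ ℓ ∈ Finset.univ.filter (fun ℓ => dst ℓ = i), lme (dst ℓ) * f ℓ := by
    intro i
    rw [Finset.mul_sum]
    refine Finset.sum_congr rfl fun ℓ hℓ => ?_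
    rw [(Finset.mem_filter.mp hℓ).2]
  have h1 : ∑ i : N, lme i * d i
      = (∑ g : G, lme (bus g) * P g) - (∑ ℓ : L, lme (src ℓ) * f ℓ)
        + (∑ ℓ : L, lme (dst ℓ) * f ℓ) := by
    calc ∑ i : N, lme i * d i
        = ∑ i : N, ((∑ g ∈ Finset.univ.filter (fun g => bus g = i), lme (bus g) * P g)
            - (∑ ℓ ∈ Finset.univ.filter (fun ℓ => src ℓ = i), lme (src ℓ) * f ℓ)
            + (∑ ℓ ∈ Finset.univ.filter (fun ℓ => dst ℓ = i), lme (dst ℓ) * f ℓ)) := by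
          refine Finset.sum_congr rfl fun i _ => ?_
          rw [← hbal i, mul_add, mul_sub, hG i, hS i, hD i]
      _ = _ := by
          rw [Finset.sum_add_distrib, Finset.sum_sub_distrib,
            Finset.sum_fiberwise Finset.univ bus (fun g => lme (bus g) * P g),
            Finset.sum_fiberwise Finset.univ src (fun ℓ => lme (src ℓ) * f ℓ),
            Finset.sum_fiberwise Finset.univ dst (fun ℓ => lme (dst ℓ) * f ℓ)]
  have h2 : ∀ ℓ : L, SCI ℓ = lme (src ℓ) - lme (dst ℓ) := by
    intro ℓ; have := hstat ℓ; rw [hSCI ℓ]; linarith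
  simp_rw [h1, h2, sub_mul]
  rw [Finset.sum_sub_distrib, Finset.sum_sub_distrib]
  ring
end

section
/- Existence of KKT multipliers at a linear programming optimum. Fix finite index types ι and κ, a cost vector c : ι → ℝ, a linear map A : (ι → ℝ) → (κ → ℝ), bounds l ≤ u, and b : κ → ℝ. Suppose x* minimizes ⟪c, x⟫ over the nonempty feasible set { x | A x = b and l ≤ x ≤ u }. Then there exist y : κ → ℝ and μ, λ : ι → ℝ with μ ≥ 0, λ ≥ 0, Aᵀ y − μ + λ = c, and complementary slackness: μ_i · (u_i − x*_i) = 0 and λ_i · (x*_i − l_i) = 0 for every i. -/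
open Finset

/-- The adjoint (transpose) of a linear map `A : (ι → ℝ) → (κ → ℝ)` with
respect to the standard inner products `⟪v, w⟫ = ∑ i, v i * w i`:
`(Aᵀ y) i = ∑ k, (A eᵢ) k * y k`, so that `⟪A x, y⟫ = ⟪x, Aᵀ y⟫`. -/
noncomputable def lpAdjoint {ι κ : Type*} [Fintype ι] [Fintype κ] [DecidableEq ι]
    (A : (ι → ℝ) →ₗ[ℝ] (κ → ℝ)) (y : κ → ℝ) : ι → ℝ :=
  fun i => ∑ k, A (Pi.single i (1 : ℝ)) k * y k

/-- The conic hull of a finite family of vectors in a finite-dimensional real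
inner product space is closed. -/
lemma isClosed_finite_cone {α E : Type*} [DecidableEq α] [NormedAddCommGroup E]
    [InnerProductSpace ℝ E] [FiniteDimensional ℝ E] (s : Finset α) (g : α → E) :
    IsClosed {x : E | ∃ f : α → ℝ, (∀ a ∈ s, 0 ≤ f a) ∧ x = ∑ a ∈ s, f a • g a} := by
  suffices h : ∀ (n : ℕ) (s : Finset α), s.card ≤ n →
      IsClosed {x : E | ∃ f : α → ℝ, (∀ a ∈ s, 0 ≤ f a) ∧ x = ∑ a ∈ s, f a • g a} from
    h s.card s le_rfl
  intro n
  induction n with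
  | zero =>
    intro s hs
    rw [Nat.le_zero, Finset.card_eq_zero] at hs
    subst hs
    have : {x : E | ∃ f : α → ℝ, (∀ a ∈ (∅ : Finset α), 0 ≤ f a) ∧ x = ∑ a ∈ (∅ : Finset α), f a • g a}
        = {0} := by
      ext x
      simp
    rw [this]
    exact isClosed_singleton
  | succ n ih =>
    intro s hs
    by_cases hli : LinearIndependent ℝ (fun a : ↥s => g ↑a)
    · -- linearly independent generators: closed embedding of the nonnegative orthant
      let L : (↥s → ℝ) →ₗ[ℝ] E :=
        { toFun := fun f => ∑ a : ↥s, f a • g ↑a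
          map_add' := by
            intro f h
            simp [add_smul, Finset.sum_add_distrib]
          map_smul' := by
            intro r f
            simp [Finset.smul_sum, smul_smul] }
      have hker : LinearMap.ker L = ⊥ := by
        rw [LinearMap.ker_eq_bot']
        intro f hf
        have := Fintype.linearIndependent_iff.1 hli f hf
        funext a
        exact this a
      have hemb : Topology.IsClosedEmbedding L := L.isClosedEmbedding_of_injective hker
      have hset : {x : E | ∃ f : α → ℝ, (∀ a ∈ s, 0 ≤ f a) ∧ x = ∑ a ∈ s, f a • g a}
          = L '' {f : ↥s → ℝ | ∀ a, 0 ≤ f a} := by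
        ext x
        constructor
        · rintro ⟨f, hf, rfl⟩
          refine ⟨fun a => f ↑a, fun a => hf _ a.2, ?_⟩
          show ∑ a : ↥s, f ↑a • g ↑a = ∑ a ∈ s, f a • g a
          exact Finset.sum_coe_sort s (fun a => f a • g a)
        · rintro ⟨h, hh, rfl⟩
          refine ⟨fun a => if ha : a ∈ s then h ⟨a, ha⟩ else 0, ?_, ?_⟩
          · intro a ha
            simp only [dif_pos ha]
            exact hh _
          · show ∑ a : ↥s, h a • g ↑a = _
            rw [← Finset.sum_coe_sort s
              (fun a => (if ha : a ∈ s then h ⟨a, ha⟩ else 0) • g a)]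
            refine Finset.sum_congr rfl fun a _ => ?_
            rw [dif_pos a.2]
        -- done
      rw [hset]
      refine hemb.isClosedMap _ ?_
      have : {f : ↥s → ℝ | ∀ a, 0 ≤ f a} = ⋂ a : ↥s, {f : ↥s → ℝ | 0 ≤ f a} := by
        ext f; simp [Set.mem_iInter]
      rw [this]
      exact isClosed_iInter fun a => isClosed_le continuous_const (continuous_apply a)
    · -- linearly dependent: conic Carathéodory step
      obtain ⟨d, hd0, hdne⟩ := Fintype.not_linearIndependent_iff.1 hli
      obtain ⟨d, hd0, a₁, hd1⟩ : ∃ d : ↥s → ℝ,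
          (∑ a : ↥s, d a • g ↑a = 0) ∧ ∃ a, 0 < d a := by
        obtain ⟨a₁, ha₁⟩ := hdne
        rcases ha₁.lt_or_gt with h | h
        · refine ⟨-d, ?_, a₁, by simpa using h⟩
          simpa [neg_smul, Finset.sum_neg_distrib, Finset.univ_eq_attach] using hd0
        · exact ⟨d, hd0, a₁, h⟩
      have key : {x : E | ∃ f : α → ℝ, (∀ a ∈ s, 0 ≤ f a) ∧ x = ∑ a ∈ s, f a • g a}
          = ⋃ a ∈ s, {x : E | ∃ f : α → ℝ,
              (∀ b ∈ s.erase a, 0 ≤ f b) ∧ x = ∑ b ∈ s.erase a, f b • g b} := by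
        ext x
        simp only [Set.mem_setOf_eq, Set.mem_iUnion, exists_prop]
        constructor
        · rintro ⟨f, hf, rfl⟩
          set T : Finset ↥s := Finset.univ.filter (fun a : ↥s => 0 < d a) with hT
          have hTne : T.Nonempty := ⟨a₁, by simp [hT, hd1]⟩
          obtain ⟨a₀, ha₀T, hmin⟩ := T.exists_min_image (fun a => f ↑a / d a) hTne
          have hda₀ : 0 < d a₀ := by
            have := Finset.mem_filter.1 ha₀T
            exact this.2
          set τ : ℝ := f ↑a₀ / d a₀ with hτ
          have hτ0 : 0 ≤ τ := div_nonneg (hf _ a₀.2) hda₀.le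
          refine ⟨↑a₀, a₀.2, fun b => if hb : b ∈ s then f b - τ * d ⟨b, hb⟩ else 0, ?_, ?_⟩
          · intro b hb
            have hbs : b ∈ s := Finset.mem_of_mem_erase hb
            simp only [dif_pos hbs]
            set b' : ↥s := ⟨b, hbs⟩
            by_cases hdb : 0 < d b'
            · have hmb := hmin b' (Finset.mem_filter.2 ⟨Finset.mem_univ _, hdb⟩)
              have : τ * d b' ≤ f ↑b' := (le_div_iff₀ hdb).1 hmb
              have hfb : f ↑b' = f b := rfl
              linarith [hfb ▸ this]
            · push_neg at hdb
              have h1 : τ * d b' ≤ 0 := mul_nonpos_iff.2 (Or.inl ⟨hτ0, hdb⟩)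
              have h2 : 0 ≤ f b := hf b hbs
              linarith
          · -- the sums agree
            have hcoef : ∀ a : ↥s,
                (if ha : (a : α) ∈ s then f ↑a - τ * d ⟨↑a, ha⟩ else 0) = f ↑a - τ * d a := by
              intro a
              rw [dif_pos a.2]
            have hzero :
                (if ha : (↑a₀ : α) ∈ s then f ↑a₀ - τ * d ⟨↑a₀, ha⟩ else 0) = 0 := by
              rw [hcoef a₀, hτ]
              field_simp
              ring
            have hsum : ∑ b ∈ s, (if hb : b ∈ s then f b - τ * d ⟨b, hb⟩ else 0) • g b
                = ∑ b ∈ s, f b • g b := by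
              rw [← Finset.sum_coe_sort s
                (fun b => (if hb : b ∈ s then f b - τ * d ⟨b, hb⟩ else 0) • g b),
                ← Finset.sum_coe_sort s (fun b => f b • g b)]
              have : ∑ a : ↥s, (if ha : (a : α) ∈ s then f ↑a - τ * d ⟨↑a, ha⟩ else 0) • g ↑a
                  = ∑ a : ↥s, (f ↑a - τ * d a) • g ↑a :=
                Finset.sum_congr rfl fun a _ => by rw [hcoef a]
              rw [this]
              have : ∑ a : ↥s, (f ↑a - τ * d a) • g ↑a
                  = ∑ a : ↥s, f ↑a • g ↑a - τ • ∑ a : ↥s, d a • g ↑a := by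
                rw [Finset.smul_sum, ← Finset.sum_sub_distrib]
                exact Finset.sum_congr rfl fun a _ => by
                  rw [sub_smul, smul_smul]
              rw [this, hd0, smul_zero, sub_zero]
            calc ∑ b ∈ s, f b • g b
                = ∑ b ∈ s, (if hb : b ∈ s then f b - τ * d ⟨b, hb⟩ else 0) • g b := hsum.symm
              _ = ∑ b ∈ s.erase ↑a₀,
                    (if hb : b ∈ s then f b - τ * d ⟨b, hb⟩ else 0) • g b := by
                  rw [← Finset.add_sum_erase s _ a₀.2, hzero, zero_smul, zero_add]
        · rintro ⟨a, ha, f, hf, rfl⟩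
          refine ⟨fun b => if b = a then 0 else f b, ?_, ?_⟩
          · intro b hb
            by_cases hba : b = a
            · simp [hba]
            · simp only [if_neg hba]
              exact hf b (Finset.mem_erase.2 ⟨hba, hb⟩)
          · rw [← Finset.add_sum_erase s (fun b => (if b = a then 0 else f b) • g b) ha,
              if_pos rfl, zero_smul, zero_add]
            exact (Finset.sum_congr rfl fun b hb => by
              rw [if_neg (Finset.ne_of_mem_erase hb)]).symm
      rw [key]
      refine Set.Finite.isClosed_biUnion s.finite_toSet fun a ha => ?_
      refine ih (s.erase a) ?_
      have := Finset.card_erase_of_mem ha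
      omega

/-- **Existence of KKT multipliers at a linear programming optimum.**
If `x*` minimizes `⟪c, x⟫` over the nonempty feasible set
`{x | A x = b ∧ l ≤ x ≤ u}` (with `l ≤ u`), then there exist multipliers
`(y, μ, λ)` with `μ, λ ≥ 0`, stationarity `Aᵀ y - μ + λ = c`, and
complementary slackness with the bound constraints. -/
theorem lp_kkt_exists
    {ι κ : Type*} [Fintype ι] [Fintype κ] [DecidableEq ι]
    (c : ι → ℝ) (A : (ι → ℝ) →ₗ[ℝ] (κ → ℝ))
    (b : κ → ℝ) (l u : ι → ℝ) (hlu : l ≤ u)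
    (xstar : ι → ℝ)
    (hfeas : A xstar = b ∧ l ≤ xstar ∧ xstar ≤ u)
    (hopt : ∀ x : ι → ℝ, A x = b → l ≤ x → x ≤ u →
      (∑ i, c i * xstar i) ≤ ∑ i, c i * x i) :
    ∃ (y : κ → ℝ) (μ lam : ι → ℝ),
      0 ≤ μ ∧ 0 ≤ lam ∧
      lpAdjoint A y - μ + lam = c ∧
      (∀ i, μ i * (u i - xstar i) = 0) ∧
      (∀ i, lam i * (xstar i - l i) = 0) := by
  classical
  obtain ⟨hAxb, hlx, hxu⟩ := hfeas
  -- basic facts about coordinates and the adjoint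
  have hsingle : ∀ x : ι → ℝ, x = ∑ i, x i • (Pi.single i (1 : ℝ) : ι → ℝ) := by
    intro x
    funext j
    simp [Finset.sum_apply, Pi.single_apply]
  have hAexp : ∀ x : ι → ℝ, A x = ∑ i, x i • A (Pi.single i 1) := by
    intro x
    conv_lhs => rw [hsingle x]
    simp
  have hadj : ∀ (y : κ → ℝ) (x : ι → ℝ),
      ∑ i, lpAdjoint A y i * x i = ∑ k, A x k * y k := by
    intro y x
    rw [hAexp x]
    simp only [lpAdjoint, Finset.sum_mul, Finset.sum_apply, Pi.smul_apply, smul_eq_mul]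
    rw [Finset.sum_comm]
    refine Finset.sum_congr rfl fun k _ => ?_
    refine Finset.sum_congr rfl fun i _ => by ring
  have hAt : ∀ y : κ → ℝ, lpAdjoint A y = ∑ k, y k • lpAdjoint A (Pi.single k 1) := by
    intro y
    funext i
    simp only [lpAdjoint, Finset.sum_apply, Pi.smul_apply, smul_eq_mul]
    refine Finset.sum_congr rfl fun k _ => ?_
    simp [Pi.single_apply, mul_ite, mul_comm]
  -- the cone of candidate stationarity certificates
  set g : ((κ ⊕ κ) ⊕ (ι ⊕ ι)) → (ι → ℝ) :=
    Sum.elim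
      (Sum.elim (fun k => lpAdjoint A (Pi.single k 1))
        (fun k => -lpAdjoint A (Pi.single k 1)))
      (Sum.elim (fun i => if xstar i = u i then -(Pi.single i (1:ℝ) : ι → ℝ) else 0)
        (fun i => if xstar i = l i then (Pi.single i (1:ℝ) : ι → ℝ) else 0))
    with hg
  set S : Set (ι → ℝ) := {x | ∃ f : ((κ ⊕ κ) ⊕ (ι ⊕ ι)) → ℝ,
      (∀ a ∈ Finset.univ, 0 ≤ f a) ∧ x = ∑ a ∈ Finset.univ, f a • g a} with hS
  -- `c` belongs to the cone
  have hcS : c ∈ S := by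
    by_contra hc
    -- separation in Euclidean space
    let K : ConvexCone ℝ (EuclideanSpace ℝ ι) :=
      { carrier := {x | WithLp.ofLp x ∈ S}
        smul_mem' := by
          rintro t ht x ⟨f, hf, hx⟩
          refine ⟨fun a => t * f a, fun a ha => mul_nonneg ht.le (hf a ha), ?_⟩
          rw [WithLp.ofLp_smul, hx, Finset.smul_sum]
          refine Finset.sum_congr rfl fun a _ => ?_
          show t • f a • g a = (t * f a) • g a
          rw [smul_smul]
        add_mem' := by
          rintro x ⟨f, hf, hx⟩ x' ⟨f', hf', hx'⟩
          refine ⟨f + f', fun a ha => add_nonneg (hf a ha) (hf' a ha), ?_⟩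
          rw [WithLp.ofLp_add, hx, hx', ← Finset.sum_add_distrib]
          refine Finset.sum_congr rfl fun a _ => ?_
          show f a • g a + f' a • g a = (f a + f' a) • g a
          rw [add_smul] }
    have hKclosed : IsClosed ((K : Set (EuclideanSpace ℝ ι))) :=
      by
        have hset : (K : Set (EuclideanSpace ℝ ι)) = {x | ∃ f : ((κ ⊕ κ) ⊕ (ι ⊕ ι)) → ℝ,
            (∀ a ∈ Finset.univ, 0 ≤ f a) ∧
              x = ∑ a ∈ Finset.univ, f a • WithLp.toLp 2 (g a)} := ?_
        · rw [hset]
          exact isClosed_finite_cone (E := EuclideanSpace ℝ ι) Finset.univ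
            (fun a => WithLp.toLp 2 (g a))
        ext x
        constructor
        · rintro ⟨f, hf, hx⟩
          exact ⟨f, hf, by apply WithLp.ofLp_injective 2; simp [hx]⟩
        · rintro ⟨f, hf, hx⟩
          exact ⟨f, hf, by simp [hx]⟩
    have hKne : ((K : Set (EuclideanSpace ℝ ι))).Nonempty :=
      ⟨0, ⟨0, fun a _ => le_rfl, by simp⟩⟩
    have hcK : (WithLp.toLp 2 c : EuclideanSpace ℝ ι) ∉ K := hc
    let C : ProperCone ℝ (EuclideanSpace ℝ ι) :=
      { carrier := (K : Set (EuclideanSpace ℝ ι))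
        add_mem' := fun ha hb => K.add_mem ha hb
        zero_mem' := ⟨0, fun a _ => le_rfl, by simp⟩
        smul_mem' := fun r x hx => by
          rcases eq_or_lt_of_le r.2 with h | h
          · have hr : r = 0 := NNReal.coe_eq_zero.1 h.symm
            rw [hr, zero_smul]
            exact ⟨0, fun a _ => le_rfl, by simp⟩
          · exact K.smul_mem h hx
        isClosed' := hKclosed }
    obtain ⟨y, hy1, hy2⟩ := ProperCone.hyperplane_separation' C (x₀ := WithLp.toLp 2 c) hcK
    have hinner : ∀ v w : EuclideanSpace ℝ ι, (inner ℝ v w : ℝ) = ∑ i, v i * w i := by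
      intro v w
      simp [PiLp.inner_apply, RCLike.inner_apply, mul_comm]
    set D : ι → ℝ := WithLp.ofLp y with hD
    -- each generator pairs nonnegatively with D
    have hgen : ∀ a, 0 ≤ ∑ i, g a i * D i := by
      intro a
      have hmem : (WithLp.toLp 2 (g a) : EuclideanSpace ℝ ι) ∈ K :=
        ⟨fun a' => if a' = a then 1 else 0, fun a' _ => by positivity, by
          simp [Finset.sum_ite_eq', ite_smul]⟩
      have h := hy1 _ hmem
      rwa [hinner] at h
    -- consequences
    have hAD : A D = 0 := by
      funext k
      have h1 := hgen (.inl (.inl k))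
      have h2 := hgen (.inl (.inr k))
      simp only [hg, Sum.elim_inl, Sum.elim_inr] at h1 h2
      have e1 : ∑ i, lpAdjoint A (Pi.single k 1) i * D i = A D k := by
        rw [hadj]
        simp [Pi.single_apply, mul_ite]
      have e2 : ∑ i, (-lpAdjoint A (Pi.single k 1) : ι → ℝ) i * D i = -(A D k) := by
        rw [← e1, ← Finset.sum_neg_distrib]
        refine Finset.sum_congr rfl fun i _ => ?_
        simp [neg_mul]
      rw [e1] at h1
      rw [e2] at h2
      have : A D k = 0 := le_antisymm (by linarith) h1
      simpa using this
    have hDu : ∀ i, xstar i = u i → D i ≤ 0 := by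
      intro i hi
      have h := hgen (.inr (.inl i))
      simp only [hg, Sum.elim_inl, Sum.elim_inr, if_pos hi] at h
      simp only [Pi.neg_apply, neg_mul, Finset.sum_neg_distrib] at h
      have : ∑ j, (Pi.single i (1:ℝ) : ι → ℝ) j * D j = D i := by
        simp [Pi.single_apply, ite_mul]
      rw [this] at h
      linarith
    have hDl : ∀ i, xstar i = l i → 0 ≤ D i := by
      intro i hi
      have h := hgen (.inr (.inr i))
      simp only [hg, Sum.elim_inl, Sum.elim_inr, if_pos hi] at h
      have : ∑ j, (Pi.single i (1:ℝ) : ι → ℝ) j * D j = D i := by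
        simp [Pi.single_apply, ite_mul]
      rw [this] at h
      exact h
    have hcD : ∑ i, c i * D i < 0 := by
      have h := hy2
      rw [hinner] at h
      calc ∑ i, c i * D i = ∑ i, D i * c i :=
            Finset.sum_congr rfl fun i _ => mul_comm _ _
        _ < 0 := by rw [Finset.sum_congr rfl fun i _ => mul_comm (D i) (c i)]; exact h
    -- build a feasible point strictly better than xstar, contradiction
    have htend : ∀ i : ι, Filter.Tendsto (fun t : ℝ => xstar i + t * D i)
        (nhdsWithin 0 (Set.Ioi 0)) (nhds (xstar i)) := by
      intro i
      have h0 : Filter.Tendsto (fun t : ℝ => xstar i + t * D i) (nhds 0)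
          (nhds (xstar i + 0 * D i)) :=
        ((continuous_const.add (continuous_id.mul continuous_const)).tendsto 0)
      simpa using h0.mono_left nhdsWithin_le_nhds
    have hev : ∀ᶠ t in nhdsWithin (0:ℝ) (Set.Ioi 0),
        (0 < t) ∧ ∀ i, l i ≤ xstar i + t * D i ∧ xstar i + t * D i ≤ u i := by
      refine Filter.Eventually.and ?_ (Filter.eventually_all.2 fun i => ?_)
      · exact self_mem_nhdsWithin
      · by_cases hu : xstar i = u i <;> by_cases hl : xstar i = l i
        · have hDi : D i = 0 := le_antisymm (hDu i hu) (hDl i hl)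
          exact Filter.Eventually.of_forall fun t => by
            rw [hDi]
            simpa using ⟨hlx i, hxu i⟩
        · have h1 : l i < xstar i := lt_of_le_of_ne (hlx i) (fun h => hl h.symm)
          have hlo := (htend i).eventually (lt_mem_nhds h1)
          have hhi : ∀ᶠ t in nhdsWithin (0:ℝ) (Set.Ioi 0),
              xstar i + t * D i ≤ u i := by
            filter_upwards [self_mem_nhdsWithin] with t ht
            have ht' : (0:ℝ) < t := ht
            have := hDu i hu
            nlinarith [hxu i]
          filter_upwards [hlo, hhi] with t h1 h2
          exact ⟨h1.le, h2⟩
        · have h1 : xstar i < u i := lt_of_le_of_ne (hxu i) hu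
          have hhi := (htend i).eventually (gt_mem_nhds h1)
          have hlo : ∀ᶠ t in nhdsWithin (0:ℝ) (Set.Ioi 0),
              l i ≤ xstar i + t * D i := by
            filter_upwards [self_mem_nhdsWithin] with t ht
            have ht' : (0:ℝ) < t := ht
            have := hDl i hl
            nlinarith [hlx i]
          filter_upwards [hlo, hhi] with t h1 h2
          exact ⟨h1, h2.le⟩
        · have h1 : l i < xstar i := lt_of_le_of_ne (hlx i) (fun h => hl h.symm)
          have h2 : xstar i < u i := lt_of_le_of_ne (hxu i) hu
          filter_upwards [(htend i).eventually (lt_mem_nhds h1),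
            (htend i).eventually (gt_mem_nhds h2)] with t ha hb
          exact ⟨ha.le, hb.le⟩
    obtain ⟨t, ht0, hbd⟩ := hev.exists
    set xt : ι → ℝ := fun i => xstar i + t * D i with hxt
    have hxt' : xt = xstar + t • D := by
      funext i
      simp [hxt]
    have hAxt : A xt = b := by
      rw [hxt', map_add, map_smul, hAD, smul_zero, add_zero, hAxb]
    have hcost := hopt xt hAxt (fun i => (hbd i).1) (fun i => (hbd i).2)
    have hsum : ∑ i, c i * xt i = ∑ i, c i * xstar i + t * ∑ i, c i * D i := by
      rw [Finset.mul_sum, ← Finset.sum_add_distrib]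
      refine Finset.sum_congr rfl fun i _ => ?_
      simp only [hxt]
      ring
    rw [hsum] at hcost
    nlinarith
  -- unpack the cone membership into multipliers
  obtain ⟨f, hf, hcf⟩ := hcS
  refine ⟨fun k => f (.inl (.inl k)) - f (.inl (.inr k)),
    fun i => if xstar i = u i then f (.inr (.inl i)) else 0,
    fun i => if xstar i = l i then f (.inr (.inr i)) else 0,
    ?_, ?_, ?_, ?_, ?_⟩
  · intro i
    simp only [Pi.zero_apply]
    split_ifs with h
    · exact hf _ (Finset.mem_univ _)
    · exact le_rfl
  · intro i
    simp only [Pi.zero_apply]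
    split_ifs with h
    · exact hf _ (Finset.mem_univ _)
    · exact le_rfl
  · -- stationarity
    have hdecomp : ∑ a ∈ Finset.univ, f a • g a
        = lpAdjoint A (fun k => f (.inl (.inl k)) - f (.inl (.inr k)))
          + (-(fun i => if xstar i = u i then f (.inr (.inl i)) else 0 : ι → ℝ))
          + (fun i => if xstar i = l i then f (.inr (.inr i)) else 0 : ι → ℝ) := by
      rw [Fintype.sum_sum_type, Fintype.sum_sum_type, Fintype.sum_sum_type]
      have hA : (∑ k, f (.inl (.inl k)) • g (.inl (.inl k)))
          + (∑ k, f (.inl (.inr k)) • g (.inl (.inr k)))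
          = lpAdjoint A (fun k => f (.inl (.inl k)) - f (.inl (.inr k))) := by
        rw [hAt, ← Finset.sum_add_distrib]
        refine Finset.sum_congr rfl fun k _ => ?_
        simp only [hg, Sum.elim_inl, Sum.elim_inr]
        rw [sub_smul]
        module
      have hB : (∑ i, f (.inr (.inl i)) • g (.inr (.inl i)))
          = -(fun i => if xstar i = u i then f (.inr (.inl i)) else 0 : ι → ℝ) := by
        have h1 : -(fun i => if xstar i = u i then f (.inr (.inl i)) else 0 : ι → ℝ)
            = ∑ i, (-(if xstar i = u i then f (.inr (.inl i)) else 0 : ℝ))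
                • (Pi.single i (1:ℝ) : ι → ℝ) := by
          conv_lhs =>
            rw [hsingle (fun i => if xstar i = u i then f (.inr (.inl i)) else 0)]
          rw [← Finset.sum_neg_distrib]
          refine Finset.sum_congr rfl fun i _ => ?_
          show -((if xstar i = u i then f (.inr (.inl i)) else 0) • _) = _
          rw [neg_smul]
        rw [h1]
        refine Finset.sum_congr rfl fun i _ => ?_
        simp only [hg, Sum.elim_inl, Sum.elim_inr]
        split_ifs with h
        · rw [smul_neg, neg_smul]
        · simp
      have hC : (∑ i, f (.inr (.inr i)) • g (.inr (.inr i)))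
          = (fun i => if xstar i = l i then f (.inr (.inr i)) else 0 : ι → ℝ) := by
        conv_rhs =>
          rw [hsingle (fun i => if xstar i = l i then f (.inr (.inr i)) else 0)]
        refine Finset.sum_congr rfl fun i _ => ?_
        simp only [hg, Sum.elim_inl, Sum.elim_inr]
        split_ifs with h
        · rfl
        · simp
      rw [hA, hB, hC]
      abel
    rw [hdecomp] at hcf
    rw [hcf]
    funext i
    simp only [Pi.add_apply, Pi.sub_apply, Pi.neg_apply]
    ring
  · intro i
    show (if xstar i = u i then f (.inr (.inl i)) else 0) * (u i - xstar i) = 0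
    split_ifs with h
    · rw [h]
      ring
    · ring
  · intro i
    show (if xstar i = l i then f (.inr (.inr i)) else 0) * (xstar i - l i) = 0
    split_ifs with h
    · rw [h]
      ring
    · ring
end

section
/- Capacity multipliers are subgradients of the value function in the capacity vector: the SCI-predicted emissions change from a capacity upgrade is a lower bound on the realized change. Fix finite index types ι, κ, a cost vector c : ι → ℝ, a linear map A, and l : ι → ℝ. Suppose x* is feasible for upper bounds u (A x* = b, l ≤ x* ≤ u) and (y, μ, λ) is a dual certificate with complementary slackness at x* (μ, λ ≥ 0, Aᵀ y − μ + λ = c, μ_i (u_i − x*_i) = 0, λ_i (x*_i − l_i) = 0). Then for every u' : ι → ℝ and every x' with A x' = b and l ≤ x' ≤ u', one has ⟪c, x'⟫ ≥ ⟪c, x*⟫ − ⟪μ, u' − u⟫. -/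
open Finset

lemma lpAdjoint_inner {ι κ : Type*} [Fintype ι] [Fintype κ] [DecidableEq ι]
    (A : (ι → ℝ) →ₗ[ℝ] (κ → ℝ)) (y : κ → ℝ) (x : ι → ℝ) :
    ∑ i, lpAdjoint A y i * x i = ∑ k, A x k * y k := by
  have hx : A x = ∑ i, x i • A (Pi.single i 1) := by
    conv_lhs => rw [pi_eq_sum_univ x]
    rw [map_sum]
    refine Finset.sum_congr rfl fun i _ => ?_
    rw [map_smul]
    have h : (fun j => if i = j then (1:ℝ) else 0) = Pi.single i (1:ℝ) := by
      ext j; simp [Pi.single_apply, eq_comm]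
    rw [h]
  unfold lpAdjoint
  rw [hx]
  simp only [Finset.sum_apply, Pi.smul_apply, smul_eq_mul, Finset.sum_mul, Finset.mul_sum]
  rw [Finset.sum_comm]
  exact Finset.sum_congr rfl fun i _ => Finset.sum_congr rfl fun k _ => by ring

/-- **Capacity multipliers are subgradients of the value function in the
capacity vector.** If `x*` is feasible for upper bounds `u` and `(y, μ, λ)` is
a dual certificate with complementary slackness at `x*`, then for every `u'`
and every `x'` with `A x' = b` and `l ≤ x' ≤ u'`,
`⟪c, x'⟫ ≥ ⟪c, x*⟫ - ⟪μ, u' - u⟫`: the SCI-predicted emissions change from a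
capacity upgrade is a lower bound on the realized change. -/
theorem lp_capacity_subgradient
    {ι κ : Type*} [Fintype ι] [Fintype κ] [DecidableEq ι]
    (c : ι → ℝ) (A : (ι → ℝ) →ₗ[ℝ] (κ → ℝ))
    (b : κ → ℝ) (l u : ι → ℝ)
    (xstar : ι → ℝ) (hAx : A xstar = b) (hl : l ≤ xstar) (hu : xstar ≤ u)
    (y : κ → ℝ) (μ lam : ι → ℝ)
    (hμ : 0 ≤ μ) (hlam : 0 ≤ lam)
    (hdual : lpAdjoint A y - μ + lam = c)
    (hcsu : ∀ i, μ i * (u i - xstar i) = 0)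
    (hcsl : ∀ i, lam i * (xstar i - l i) = 0) :
    ∀ (u' : ι → ℝ) (x' : ι → ℝ), A x' = b → l ≤ x' → x' ≤ u' →
      (∑ i, c i * x' i) ≥
        (∑ i, c i * xstar i) - ∑ i, μ i * (u' i - u i) := by
  intro u' x' hAx' hl' hu'
  set d : ι → ℝ := x' - xstar with hd
  have hAd : A d = 0 := by
    rw [hd, map_sub, hAx, hAx', sub_self]
  have hadj : ∑ i, lpAdjoint A y i * d i = 0 := by
    rw [lpAdjoint_inner, hAd]
    simp
  have hc : ∀ i, c i = lpAdjoint A y i - μ i + lam i := by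
    intro i; rw [← hdual]; rfl
  have hsplit : ∑ i, c i * x' i - ∑ i, c i * xstar i
      = (∑ i, lpAdjoint A y i * d i) - (∑ i, μ i * d i) + (∑ i, lam i * d i) := by
    rw [← Finset.sum_sub_distrib, ← Finset.sum_sub_distrib, ← Finset.sum_add_distrib]
    refine Finset.sum_congr rfl fun i _ => ?_
    rw [hc i]
    simp only [hd, Pi.sub_apply]
    ring
  have hlam_nn : 0 ≤ ∑ i, lam i * d i := by
    refine Finset.sum_nonneg fun i _ => ?_
    have : lam i * d i = lam i * (x' i - l i) + lam i * (l i - xstar i) := by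
      simp only [hd, Pi.sub_apply]; ring
    rw [this]
    have h1 : 0 ≤ lam i * (x' i - l i) :=
      mul_nonneg (hlam i) (sub_nonneg.2 (hl' i))
    have h2 : lam i * (l i - xstar i) = 0 := by
      have := hcsl i; nlinarith [hcsl i]
    linarith
  have hμ_le : ∑ i, μ i * d i ≤ ∑ i, μ i * (u' i - u i) := by
    refine Finset.sum_le_sum fun i _ => ?_
    have h1 : μ i * d i = μ i * (x' i - u i) + μ i * (u i - xstar i) := by
      simp only [hd, Pi.sub_apply]; ring
    have h2 : μ i * (x' i - u i) ≤ μ i * (u' i - u i) :=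
      mul_le_mul_of_nonneg_left (by linarith [hu' i]) (hμ i)
    rw [h1, hcsu i]
    linarith
  linarith [hsplit, hadj, hlam_nn, hμ_le]
end

section
/- Closed form for the optimal carbon-aware load-shifting objective. Let m be a natural number, cap ≥ 0 a real number, and w : Fin m → ℝ a monotone nondecreasing vector of locational marginal emission values. Consider the linear program: minimize Σ_{k} w k · Δ k over Δ : Fin m → ℝ subject to Σ_k Δ k = 0 and −cap ≤ Δ k ≤ cap for every k. Then the minimum is attained and equals cap · ( Σ_{k < ⌊m/2⌋} w k − Σ_{k ≥ m − ⌊m/2⌋} w k ); in particular the optimal value is nonpositive, and it is attained by shifting the full amount cap onto the ⌊m/2⌋ slots with smallest LME and removing cap from the ⌊m/2⌋ slots with largest LME. -/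
open Finset

lemma aux_card_load_shift (m n : ℕ) (hn : n ≤ m) :
    ((univ : Finset (Fin m)).filter (fun k : Fin m => (k : ℕ) < n)).card = n := by
  have : (univ : Finset (Fin m)).filter (fun k : Fin m => (k : ℕ) < n)
      = Finset.map (Fin.castLEEmb hn) univ := by
    ext k
    simp only [mem_filter, mem_univ, true_and, mem_map, Fin.castLEEmb]
    constructor
    · intro hk
      exact ⟨⟨k, hk⟩, rfl⟩
    · rintro ⟨a, rfl⟩
      exact a.isLt
  rw [this]
  simp

lemma aux_key_load_shift (m : ℕ) (c : ℝ) (g : Fin m → ℝ) :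
    (∑ k, g k * (if (k : ℕ) < m / 2 then c else if m - m / 2 ≤ (k : ℕ) then -c else 0))
      = c * (∑ k ∈ univ.filter (fun k : Fin m => (k : ℕ) < m / 2), g k)
        - c * (∑ k ∈ univ.filter (fun k : Fin m => m - m / 2 ≤ (k : ℕ)), g k) := by
  have hdisj : ∀ k : Fin m, m - m / 2 ≤ (k : ℕ) → ¬ ((k : ℕ) < m / 2) := by
    intro k hk; omega
  rw [← Finset.sum_filter_add_sum_filter_not univ (fun k : Fin m => (k : ℕ) < m / 2)]
  have h1 : ∑ k ∈ univ.filter (fun k : Fin m => (k : ℕ) < m / 2),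
      g k * (if (k : ℕ) < m / 2 then c else if m - m / 2 ≤ (k : ℕ) then -c else 0)
      = c * ∑ k ∈ univ.filter (fun k : Fin m => (k : ℕ) < m / 2), g k := by
    rw [Finset.mul_sum]
    apply Finset.sum_congr rfl
    intro k hk
    simp only [mem_filter] at hk
    rw [if_pos hk.2, mul_comm]
  have h2 : ∑ k ∈ univ.filter (fun k : Fin m => ¬ (k : ℕ) < m / 2),
      g k * (if (k : ℕ) < m / 2 then c else if m - m / 2 ≤ (k : ℕ) then -c else 0)
      = - (c * ∑ k ∈ univ.filter (fun k : Fin m => m - m / 2 ≤ (k : ℕ)), g k) := by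
    have : ∀ k ∈ univ.filter (fun k : Fin m => ¬ (k : ℕ) < m / 2),
        g k * (if (k : ℕ) < m / 2 then c else if m - m / 2 ≤ (k : ℕ) then -c else 0)
        = if m - m / 2 ≤ (k : ℕ) then g k * (-c) else 0 := by
      intro k hk
      simp only [mem_filter] at hk
      rw [if_neg hk.2]
      split <;> simp
    rw [Finset.sum_congr rfl this, ← Finset.sum_filter, Finset.filter_filter]
    have : (univ.filter (fun k : Fin m => ¬ (k : ℕ) < m / 2 ∧ m - m / 2 ≤ (k : ℕ)))
        = univ.filter (fun k : Fin m => m - m / 2 ≤ (k : ℕ)) := by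
      apply Finset.filter_congr
      intro k _
      constructor
      · exact fun h => h.2
      · intro h; exact ⟨hdisj k h, h⟩
    rw [this, Finset.mul_sum, ← Finset.sum_neg_distrib]
    apply Finset.sum_congr rfl
    intro k _; ring
  rw [h1, h2]; ring

/-- **Closed form for the optimal carbon-aware load-shifting objective.**
For `cap ≥ 0` and a monotone nondecreasing LME vector `w : Fin m → ℝ`, the
linear program minimizing `∑ k, w k * Δ k` subject to `∑ k, Δ k = 0` and
`-cap ≤ Δ k ≤ cap` attains its minimum, which equals
`cap * (∑_{k < ⌊m/2⌋} w k - ∑_{k ≥ m - ⌊m/2⌋} w k)`; this value is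
nonpositive, and it is attained by the shift putting `+cap` on the `⌊m/2⌋`
smallest-LME slots and `-cap` on the `⌊m/2⌋` largest-LME slots. -/
theorem load_shifting_closed_form
    (m : ℕ) (cap : ℝ) (hcap : 0 ≤ cap)
    (w : Fin m → ℝ) (hw : Monotone w) :
    IsLeast
      {val : ℝ | ∃ Δ : Fin m → ℝ,
        (∑ k, Δ k = 0) ∧ (∀ k, -cap ≤ Δ k ∧ Δ k ≤ cap) ∧
        val = ∑ k, w k * Δ k}
      (cap * ((∑ k ∈ Finset.univ.filter (fun k : Fin m => (k : ℕ) < m / 2), w k)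
        - ∑ k ∈ Finset.univ.filter (fun k : Fin m => m - m / 2 ≤ (k : ℕ)), w k)) ∧
    cap * ((∑ k ∈ Finset.univ.filter (fun k : Fin m => (k : ℕ) < m / 2), w k)
        - ∑ k ∈ Finset.univ.filter (fun k : Fin m => m - m / 2 ≤ (k : ℕ)), w k) ≤ 0 ∧
    (let Δstar : Fin m → ℝ := fun k =>
        if (k : ℕ) < m / 2 then cap
        else if m - m / 2 ≤ (k : ℕ) then -cap else 0;
      (∑ k, Δstar k = 0) ∧ (∀ k, -cap ≤ Δstar k ∧ Δstar k ≤ cap) ∧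
      (∑ k, w k * Δstar k) =
        cap * ((∑ k ∈ Finset.univ.filter (fun k : Fin m => (k : ℕ) < m / 2), w k)
          - ∑ k ∈ Finset.univ.filter (fun k : Fin m => m - m / 2 ≤ (k : ℕ)), w k)) := by
  set fstar : Fin m → ℝ := fun k =>
      if (k : ℕ) < m / 2 then cap else if m - m / 2 ≤ (k : ℕ) then -cap else 0 with hfstar
  -- cardinalities
  have hS : ((univ : Finset (Fin m)).filter (fun k : Fin m => (k : ℕ) < m / 2)).card
      = m / 2 := aux_card_load_shift m (m / 2) (by omega)
  have hT : ((univ : Finset (Fin m)).filter (fun k : Fin m => m - m / 2 ≤ (k : ℕ))).card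
      = m / 2 := by
    have h1 := aux_card_load_shift m (m - m / 2) (by omega)
    have h2 : (univ : Finset (Fin m)).filter (fun k : Fin m => m - m / 2 ≤ (k : ℕ))
        = univ.filter (fun k : Fin m => ¬ (k : ℕ) < m - m / 2) := by
      apply Finset.filter_congr
      intro k _
      simp only [not_lt, eq_iff_iff]
    rw [h2, Finset.filter_not, Finset.card_sdiff_of_subset (Finset.filter_subset _ _), h1,
      Finset.card_univ, Fintype.card_fin]
    omega
  -- sum of fstar is zero
  have sum0 : ∑ k, fstar k = 0 := by
    have hkey := aux_key_load_shift m cap (fun _ : Fin m => (1 : ℝ))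
    simp only [one_mul] at hkey
    rw [hfstar]
    rw [hkey]
    rw [Finset.sum_const, Finset.sum_const, hS, hT]
    ring
  -- value of fstar
  have val_eq : ∑ k, w k * fstar k
      = cap * ((∑ k ∈ univ.filter (fun k : Fin m => (k : ℕ) < m / 2), w k)
        - ∑ k ∈ univ.filter (fun k : Fin m => m - m / 2 ≤ (k : ℕ)), w k) := by
    rw [hfstar, aux_key_load_shift m cap w]
    ring
  -- feasibility bounds of fstar
  have bounds : ∀ k : Fin m, -cap ≤ fstar k ∧ fstar k ≤ cap := by
    intro k
    rw [hfstar]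
    constructor
    · dsimp only
      split
      · linarith
      · split
        · linarith
        · linarith
    · dsimp only
      split
      · linarith
      · split
        · linarith
        · linarith
  -- lower bound for any feasible Δ
  have lower : ∀ v ∈ {val : ℝ | ∃ Δ : Fin m → ℝ,
        (∑ k, Δ k = 0) ∧ (∀ k, -cap ≤ Δ k ∧ Δ k ≤ cap) ∧
        val = ∑ k, w k * Δ k},
      cap * ((∑ k ∈ univ.filter (fun k : Fin m => (k : ℕ) < m / 2), w k)
        - ∑ k ∈ univ.filter (fun k : Fin m => m - m / 2 ≤ (k : ℕ)), w k) ≤ v := by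
    rintro v ⟨Δ, hsum, hbd, rfl⟩
    rcases Nat.eq_zero_or_pos m with hm | hm
    · subst hm
      simp
    · set t : ℝ := w ⟨m / 2, by omega⟩ with ht
      have per : ∀ k : Fin m, 0 ≤ (w k - t) * (Δ k - fstar k) := by
        intro k
        rw [hfstar]
        dsimp only
        by_cases hk1 : (k : ℕ) < m / 2
        · rw [if_pos hk1]
          have hw1 : w k ≤ t := hw (by rw [Fin.le_def]; simpa using hk1.le)
          have hb := (hbd k).2
          nlinarith
        · rw [if_neg hk1]
          by_cases hk2 : m - m / 2 ≤ (k : ℕ)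
          · rw [if_pos hk2]
            have hw2 : t ≤ w k := hw (by rw [Fin.le_def]; simp; omega)
            have hb := (hbd k).1
            nlinarith
          · rw [if_neg hk2]
            have hkval : (k : ℕ) = m / 2 := by omega
            have hkk : k = ⟨m / 2, by omega⟩ := Fin.ext hkval
            rw [hkk, ← ht]
            ring_nf
            simp
      have hnn : (0 : ℝ) ≤ ∑ k, (w k - t) * (Δ k - fstar k) :=
        Finset.sum_nonneg (fun k _ => per k)
      have expand : ∑ k, (w k - t) * (Δ k - fstar k)
          = ∑ k, w k * Δ k - ∑ k, w k * fstar k - t * (∑ k, Δ k) + t * (∑ k, fstar k) := by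
        rw [Finset.mul_sum, Finset.mul_sum, ← Finset.sum_sub_distrib, ← Finset.sum_sub_distrib,
          ← Finset.sum_add_distrib]
        apply Finset.sum_congr rfl
        intro k _
        ring
      rw [expand, hsum, sum0, val_eq] at hnn
      linarith
  refine ⟨⟨⟨fstar, sum0, bounds, val_eq.symm⟩, lower⟩, ?_, sum0, bounds, val_eq⟩
  have h0 : (0 : ℝ) ∈ {val : ℝ | ∃ Δ : Fin m → ℝ,
      (∑ k, Δ k = 0) ∧ (∀ k, -cap ≤ Δ k ∧ Δ k ≤ cap) ∧
      val = ∑ k, w k * Δ k} := by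
    exact ⟨fun _ => 0, by simp, fun k => ⟨show -cap ≤ (0:ℝ) by linarith, hcap⟩, by simp⟩
  exact lower 0 h0
end

section
/- Euler decomposition of the linear programming value function: total emissions equal the sum of all marginal accounts. Fix finite index types ι and κ, a cost vector c : ι → ℝ, and a linear map A : (ι → ℝ) → (κ → ℝ). For p = (b, l, u) with b : κ → ℝ and l, u : ι → ℝ define F(p) := { x | A x = b and l ≤ x ≤ u } and V(p) := inf { ⟪c, x⟫ | x ∈ F(p) }. Suppose that for every t > 0 the set F(t • p) is nonempty and the objective is bounded below on it, and suppose V (viewed as a function of the parameter vector p) is differentiable at p. Then V(p) = ⟪∇_b V(p), b⟫ + ⟪∇_l V(p), l⟫ + ⟪∇_u V(p), u⟫; that is, the optimal value decomposes exactly into the marginal sensitivities to loads, lower capacity bounds, and upper capacity bounds, each multiplied by the corresponding parameter. -/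
open Finset

/-- The feasible set of the box-constrained equality-form linear program as a
function of the full parameter vector `p = (b, l, u)`:
`A x = b` and `l ≤ x ≤ u` componentwise. -/
def lpFeasibleP {ι κ : Type*} (A : (ι → ℝ) →ₗ[ℝ] (κ → ℝ))
    (p : (κ → ℝ) × (ι → ℝ) × (ι → ℝ)) : Set (ι → ℝ) :=
  {x | A x = p.1 ∧ p.2.1 ≤ x ∧ x ≤ p.2.2}

/-- The value function of the linear program as a function of the parameter
vector `p = (b, l, u)`: the infimum of `⟪c, x⟫ = ∑ i, c i * x i` over the
feasible set. -/
noncomputable def lpValueP {ι κ : Type*} [Fintype ι] (c : ι → ℝ)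
    (A : (ι → ℝ) →ₗ[ℝ] (κ → ℝ)) (p : (κ → ℝ) × (ι → ℝ) × (ι → ℝ)) : ℝ :=
  sInf ((fun x => ∑ i, c i * x i) '' lpFeasibleP A p)

open Pointwise in
lemma lpFeasibleP_smul {ι κ : Type*} (A : (ι → ℝ) →ₗ[ℝ] (κ → ℝ))
    (p : (κ → ℝ) × (ι → ℝ) × (ι → ℝ)) {t : ℝ} (ht : 0 < t) :
    lpFeasibleP A (t • p) = t • lpFeasibleP A p := by
  ext x
  constructor
  · rintro ⟨hA, hl, hu⟩
    refine ⟨t⁻¹ • x, ⟨?_, ?_, ?_⟩, by simp [smul_smul, mul_inv_cancel₀ ht.ne']⟩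
    · rw [map_smul, hA]
      simp [smul_smul, inv_mul_cancel₀ ht.ne']
    · intro i
      have h := hl i
      simp only [Prod.smul_fst, Prod.smul_snd, Pi.smul_apply, smul_eq_mul] at h ⊢
      rw [le_inv_mul_iff₀ ht]
      exact h
    · intro i
      have h := hu i
      simp only [Prod.smul_fst, Prod.smul_snd, Pi.smul_apply, smul_eq_mul] at h ⊢
      rw [inv_mul_le_iff₀ ht]
      exact h
  · rintro ⟨y, ⟨hA, hl, hu⟩, rfl⟩
    refine ⟨by rw [map_smul, hA]; rfl, fun i => ?_, fun i => ?_⟩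
    · have := hl i
      simp only [Prod.smul_fst, Prod.smul_snd, Pi.smul_apply, smul_eq_mul]
      exact mul_le_mul_of_nonneg_left this ht.le
    · have := hu i
      simp only [Prod.smul_fst, Prod.smul_snd, Pi.smul_apply, smul_eq_mul]
      exact mul_le_mul_of_nonneg_left this ht.le

open Pointwise in
lemma lpValueP_smul {ι κ : Type*} [Fintype ι] (c : ι → ℝ)
    (A : (ι → ℝ) →ₗ[ℝ] (κ → ℝ)) (p : (κ → ℝ) × (ι → ℝ) × (ι → ℝ))
    {t : ℝ} (ht : 0 < t) :
    lpValueP c A (t • p) = t * lpValueP c A p := by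
  have himg : (fun x => ∑ i, c i * x i) '' lpFeasibleP A (t • p)
      = t • ((fun x => ∑ i, c i * x i) '' lpFeasibleP A p) := by
    rw [lpFeasibleP_smul A p ht, ← Set.image_smul, Set.image_image,
      ← Set.image_smul, Set.image_image]
    congr 1
    funext x
    simp [Finset.mul_sum, mul_left_comm]
  rw [lpValueP, himg, Real.sInf_smul_of_nonneg ht.le]
  rfl

/-- **Euler decomposition of the linear programming value function.**
If for every `t > 0` the feasible set `F(t • p)` is nonempty with the
objective bounded below on it, and the value function `V` is differentiable at
`p = (b, l, u)`, then
`V(p) = ⟪∇_b V(p), b⟫ + ⟪∇_l V(p), l⟫ + ⟪∇_u V(p), u⟫`, expressed here as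
`V p = DV(b,0,0) + DV(0,l,0) + DV(0,0,u)` where `DV = fderiv ℝ V p`: the
optimal value decomposes exactly into the marginal sensitivities to loads and
lower/upper capacity bounds, each multiplied by the corresponding parameter. -/
theorem lpValue_euler_decomposition
    {ι κ : Type*} [Fintype ι] [Fintype κ]
    (c : ι → ℝ) (A : (ι → ℝ) →ₗ[ℝ] (κ → ℝ))
    (p : (κ → ℝ) × (ι → ℝ) × (ι → ℝ))
    (hfeas : ∀ t : ℝ, 0 < t →
      (lpFeasibleP A (t • p)).Nonempty ∧
      BddBelow ((fun x => ∑ i, c i * x i) '' lpFeasibleP A (t • p)))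
    (hdiff : DifferentiableAt ℝ (lpValueP c A) p) :
    lpValueP c A p =
      fderiv ℝ (lpValueP c A) p (p.1, 0, 0)
        + fderiv ℝ (lpValueP c A) p (0, p.2.1, 0)
        + fderiv ℝ (lpValueP c A) p (0, 0, p.2.2) := by
  set V := lpValueP c A with hV
  set D := fderiv ℝ V p with hD
  -- derivative of t ↦ V (t • p) at 1 is D p
  have hsmul : HasDerivAt (fun t : ℝ => t • p) p 1 := by
    simpa using (hasDerivAt_id (1 : ℝ)).smul_const p
  have h1 : HasDerivAt (fun t : ℝ => V (t • p)) (D p) 1 := by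
    have hF : HasFDerivAt V D ((1:ℝ) • p) := by simpa using hdiff.hasFDerivAt
    exact hF.comp_hasDerivAt 1 hsmul
  -- eventually V (t • p) = t * V p near 1
  have heq : (fun t : ℝ => V (t • p)) =ᶠ[nhds 1] fun t => t * V p := by
    filter_upwards [Ioi_mem_nhds (show (0:ℝ) < 1 by norm_num)] with t ht
    exact lpValueP_smul c A p ht
  have h2 : HasDerivAt (fun t : ℝ => V (t • p)) (V p) 1 := by
    have : HasDerivAt (fun t : ℝ => t * V p) (V p) 1 := by
      simpa using (hasDerivAt_id (1 : ℝ)).mul_const (V p)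
    exact this.congr_of_eventuallyEq heq
  have key : V p = D p := h2.unique h1
  have hp : p = (p.1, 0, 0) + (0, p.2.1, 0) + (0, 0, p.2.2) := by
    ext <;> simp
  calc V p = D p := key
    _ = D ((p.1, 0, 0) + (0, p.2.1, 0) + (0, 0, p.2.2)) := by rw [← hp]
    _ = _ := by rw [map_add, map_add]
end
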